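/- The canonical map C(ℤ_p, ℤ_p) → lim_k C(ℤ_p, ℤ/p^kℤ), induced by the reduction maps ℤ_p → ℤ/p^kℤ, is an isomorphism of rings. -/

import Mathlib

open scoped ContinuousMap

variable (p : ℕ) [Fact p.Prime]
  [∀ k : ℕ, TopologicalSpace (ZMod (p ^ k))] [∀ k : ℕ, DiscreteTopology (ZMod (p ^ k))]

/-- The inverse limit `lim_k C(ℤ_p, ℤ/p^kℤ)`, realized as the subring of the
product ring `Π k, C(ℤ_p, ℤ/p^kℤ)` consisting of families compatible with the
reduction maps `ℤ/p^{k+1}ℤ → ℤ/p^kℤ`. -/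
noncomputable def padicLimSubring : Subring (∀ k : ℕ, C(ℤ_[p], ZMod (p ^ k))) where
  carrier := {x | ∀ (k : ℕ) (z : ℤ_[p]),
    ZMod.castHom (pow_dvd_pow p (Nat.le_succ k)) (ZMod (p ^ k)) (x (k + 1) z) = x k z}
  zero_mem' := by
    intro k z
    simp only [Pi.zero_apply, ContinuousMap.zero_apply, map_zero]
  one_mem' := by
    intro k z
    simp only [Pi.one_apply, ContinuousMap.one_apply, map_one]
  add_mem' := by
    intro a b ha hb k z
    simp only [Pi.add_apply, ContinuousMap.add_apply, map_add, ha k z, hb k z]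
  mul_mem' := by
    intro a b ha hb k z
    simp only [Pi.mul_apply, ContinuousMap.mul_apply, map_mul, ha k z, hb k z]
  neg_mem' := by
    intro a ha k z
    simp only [Pi.neg_apply, ContinuousMap.neg_apply, map_neg, ha k z]

set_option linter.unusedSectionVars false
set_option linter.unnecessarySimpa false

lemma PLS.toZModPow_eq_iff (k : ℕ) (x y : ℤ_[p]) :
    PadicInt.toZModPow k x = PadicInt.toZModPow k y ↔ ‖x - y‖ ≤ (p : ℝ) ^ (-(k : ℤ)) := by
  rw [PadicInt.norm_le_pow_iff_mem_span_pow, ← PadicInt.ker_toZModPow, RingHom.mem_ker,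
    map_sub, sub_eq_zero]

lemma PLS.continuous_toZModPow (k : ℕ) :
    Continuous (PadicInt.toZModPow (p := p) k) := by
  have hp0 : (0 : ℝ) < p := by exact_mod_cast (Fact.out : p.Prime).pos
  rw [continuous_discrete_rng]
  intro b
  rw [Metric.isOpen_iff]
  intro x hx
  refine ⟨(p : ℝ) ^ (-(k : ℤ)), zpow_pos hp0 _, fun y hy => ?_⟩
  simp only [Set.mem_preimage, Set.mem_singleton_iff] at hx ⊢
  rw [← hx, PLS.toZModPow_eq_iff]
  exact le_of_lt (by simpa [dist_eq_norm] using hy)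

/-- evaluation ring homs -/
noncomputable def PLS.evalHom (z : ℤ_[p]) (k : ℕ) : (padicLimSubring p) →+* ZMod (p ^ k) where
  toFun x := x.1 k z
  map_one' := rfl
  map_mul' _ _ := rfl
  map_zero' := rfl
  map_add' _ _ := rfl

lemma PLS.evalHom_compat (z : ℤ_[p]) : ∀ (k1 k2 : ℕ) (hk : k1 ≤ k2),
    (ZMod.castHom (pow_dvd_pow p hk) (ZMod (p ^ k1))).comp (PLS.evalHom p z k2)
      = PLS.evalHom p z k1 := by
  intro k1 k2 hk
  induction k2, hk using Nat.le_induction with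
  | base =>
    ext x
    simp [PLS.evalHom, ZMod.castHom_apply, ZMod.cast_id]
  | succ k hk ih =>
    ext x
    have h1 : ZMod.castHom (pow_dvd_pow p (Nat.le_succ k)) (ZMod (p ^ k)) (x.1 (k + 1) z)
        = x.1 k z := x.2 k z
    have h2 : ZMod.castHom (pow_dvd_pow p hk) (ZMod (p ^ k1)) (x.1 k z) = x.1 k1 z :=
      RingHom.congr_fun ih x
    change ZMod.castHom (pow_dvd_pow p (hk.trans (Nat.le_succ k))) (ZMod (p ^ k1)) (x.1 (k + 1) z) = x.1 k1 z
    rw [← h2, ← h1, ← RingHom.comp_apply, ZMod.castHom_comp]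

lemma PLS.lift_apply (x : padicLimSubring p) (k : ℕ) (z : ℤ_[p]) :
    PadicInt.toZModPow k (PadicInt.lift (PLS.evalHom_compat p z) x) = x.1 k z :=
  RingHom.congr_fun (PadicInt.lift_spec (PLS.evalHom_compat p z) k) x

/-- the inverse -/
noncomputable def PLS.inv (x : padicLimSubring p) : C(ℤ_[p], ℤ_[p]) where
  toFun z := PadicInt.lift (PLS.evalHom_compat p z) x
  continuous_toFun := by
    rw [continuous_iff_continuousAt]
    intro z₀
    rw [Metric.continuousAt_iff]
    intro ε hε
    obtain ⟨k, hk⟩ := PadicInt.exists_pow_neg_lt p hε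
    have hopen : IsOpen ((x.1 k) ⁻¹' {x.1 k z₀}) :=
      (isOpen_discrete _).preimage (x.1 k).continuous
    obtain ⟨δ, hδ, hball⟩ := Metric.isOpen_iff.mp hopen z₀ rfl
    refine ⟨δ, hδ, fun {z} hz => ?_⟩
    have hxk : x.1 k z = x.1 k z₀ := hball hz
    have : PadicInt.toZModPow k (PadicInt.lift (PLS.evalHom_compat p z) x)
        = PadicInt.toZModPow k (PadicInt.lift (PLS.evalHom_compat p z₀) x) := by
      rw [PLS.lift_apply, PLS.lift_apply, hxk]
    rw [PLS.toZModPow_eq_iff] at this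
    calc dist _ _ = ‖_ - _‖ := dist_eq_norm _ _
      _ ≤ (p : ℝ) ^ (-(k : ℤ)) := this
      _ < ε := hk

/-- the forward ring hom -/
noncomputable def PLS.toHom : C(ℤ_[p], ℤ_[p]) →+* padicLimSubring p where
  toFun f := ⟨fun k => ⟨fun z => PadicInt.toZModPow k (f z),
      (PLS.continuous_toZModPow p k).comp f.continuous⟩, fun k z => by
      simpa using RingHom.congr_fun
        (PadicInt.zmod_cast_comp_toZModPow k (k + 1) (Nat.le_succ k)) (f z)⟩
  map_one' := Subtype.ext <| funext fun k => ContinuousMap.ext fun z => by simp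
  map_mul' f g := Subtype.ext <| funext fun k => ContinuousMap.ext fun z => by simp
  map_zero' := Subtype.ext <| funext fun k => ContinuousMap.ext fun z => by simp
  map_add' f g := Subtype.ext <| funext fun k => ContinuousMap.ext fun z => by simp


/-- The canonical map `C(ℤ_p, ℤ_p) → lim_k C(ℤ_p, ℤ/p^kℤ)` induced by the
reductions `ℤ_p → ℤ/p^kℤ` is an isomorphism of rings. -/
theorem stmt6 :
    ∃ e : C(ℤ_[p], ℤ_[p]) ≃+* padicLimSubring p,
      ∀ (f : C(ℤ_[p], ℤ_[p])) (k : ℕ) (z : ℤ_[p]),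
        (e f : ∀ k : ℕ, C(ℤ_[p], ZMod (p ^ k))) k z = PadicInt.toZModPow k (f z) := by
  have hbij : Function.Bijective (PLS.toHom p) := by
    constructor
    · intro f g h
      ext z
      apply PadicInt.ext_of_toZModPow.mp
      intro n
      have := congrFun (congrArg Subtype.val h) n
      exact DFunLike.congr_fun this z
    · intro x
      refine ⟨PLS.inv p x, Subtype.ext <| funext fun k => ContinuousMap.ext fun z => ?_⟩
      exact PLS.lift_apply p x k z
  exact ⟨RingEquiv.ofBijective (PLS.toHom p) hbij, fun f k z => rfl⟩
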